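/- For any probability vector π* on [n] with π* > 0, the payoff matrix α_{ij} = −π*_j/π*_i + n·δ_{ij} satisfies the KKT conditions certifying that π* is a maximin strategy, with t* = 0 and u*_j = (π*_j)^{-1} / Σ_k (π*_k)^{-1}. In particular π* is a Nash solution of this game. -/
import Mathlib


open Finset

/-- A probability vector on `Fin n`. -/
def IsProb {n : ℕ} (π : Fin n → ℝ) : Prop := (∀ i, 0 ≤ π i) ∧ ∑ i, π i = 1

/-- Expected payoff of the two-player game with payoff matrix `A`. -/
def payoff {n : ℕ} (A : Fin n → Fin n → ℝ) (π π' : Fin n → ℝ) : ℝ :=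
  ∑ i, ∑ j, π i * π' j * A i j

/-- Nash equilibrium of the zero-sum game with payoff matrix `A`. -/
def IsNash {n : ℕ} (A : Fin n → Fin n → ℝ) (π₁ π₂ : Fin n → ℝ) : Prop :=
  IsProb π₁ ∧ IsProb π₂ ∧
  (∀ π, IsProb π → payoff A π π₂ ≤ payoff A π₁ π₂) ∧
  (∀ π', IsProb π' → payoff A π₁ π₂ ≤ payoff A π₁ π')


/-- The worst-case payoff for the first player playing `π`. -/
noncomputable def worstCase {n : ℕ} (A : Fin n → Fin n → ℝ) (π : Fin n → ℝ) : ℝ :=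
  sInf ((fun π' => payoff A π π') '' {π' | IsProb π'})

/-- `π` is an optimal maximin strategy for the first player. -/
def IsMaximin {n : ℕ} (A : Fin n → Fin n → ℝ) (π : Fin n → ℝ) : Prop :=
  IsProb π ∧ ∀ π', IsProb π' → worstCase A π' ≤ worstCase A π

theorem stmt_14 {n : ℕ} (πs : Fin n → ℝ) (hpos : ∀ i, 0 < πs i) (hsum : ∑ i, πs i = 1) :
    (∀ j, ∑ i, πs i * (-(πs j / πs i) + n * if i = j then 1 else 0) ≤ 0) ∧
    (∀ j, ((πs j)⁻¹ / ∑ k, (πs k)⁻¹) *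
        ((∑ i, πs i * (-(πs j / πs i) + n * if i = j then 1 else 0)) - 0) = 0) ∧
    (∀ i, ∑ j, (-(πs j / πs i) + n * if i = j then 1 else 0) *
        ((πs j)⁻¹ / ∑ k, (πs k)⁻¹) = 0) ∧
    IsMaximin (fun i j => -(πs j / πs i) + n * if i = j then 1 else 0) πs := by

  have hn : 0 < n := by
    rcases Nat.eq_zero_or_pos n with h | h
    · subst h; simp at hsum
    · exact h
  have hne : ∀ i, πs i ≠ 0 := fun i => (hpos i).ne'
  have hSpos : (0:ℝ) < ∑ k, (πs k)⁻¹ :=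
    Finset.sum_pos (fun k _ => inv_pos.mpr (hpos k))
      (Finset.univ_nonempty_iff.mpr (Fin.pos_iff_nonempty.mp hn))
  set S : ℝ := ∑ k, (πs k)⁻¹ with hS
  have key1 : ∀ j, ∑ i, πs i * (-(πs j / πs i) + n * if i = j then 1 else 0) = 0 := by
    intro j
    have h1 : ∀ i : Fin n, πs i * (-(πs j / πs i) + n * if i = j then 1 else 0)
        = -πs j + n * (if i = j then πs i else 0) := by
      intro i
      by_cases h : i = j
      · subst h; rw [if_pos rfl, if_pos rfl, div_self (hne i)]; ring
      · rw [if_neg h, if_neg h]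
        rw [mul_zero, add_zero, add_zero, mul_neg, neg_inj, mul_comm,
          div_mul_cancel₀ _ (hne i)]
    calc ∑ i, πs i * (-(πs j / πs i) + n * if i = j then 1 else 0)
        = ∑ i : Fin n, (-πs j + n * (if i = j then πs i else 0)) := by
          exact Finset.sum_congr rfl fun i _ => h1 i
      _ = 0 := by
          rw [Finset.sum_add_distrib, Finset.sum_const, ← Finset.mul_sum,
            Finset.sum_ite_eq' Finset.univ j πs]
          simp
  have key2 : ∀ i, ∑ j, (-(πs j / πs i) + n * if i = j then 1 else 0) * ((πs j)⁻¹ / S) = 0 := by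
    intro i
    have h1 : ∀ j : Fin n, (-(πs j / πs i) + n * if i = j then 1 else 0) * ((πs j)⁻¹ / S)
        = (-(πs i)⁻¹ + n * (if i = j then (πs j)⁻¹ else 0)) / S := by
      intro j
      by_cases h : i = j
      · subst h
        rw [if_pos rfl, if_pos rfl, div_self (hne i), mul_one]
        field_simp
      · rw [if_neg h, if_neg h]
        rw [mul_zero, add_zero, add_zero, neg_mul, neg_div, neg_inj,
          div_mul_div_comm, mul_inv_cancel₀ (hne j), one_div, mul_inv,
          ← div_eq_mul_inv]
    calc ∑ j, (-(πs j / πs i) + n * if i = j then 1 else 0) * ((πs j)⁻¹ / S)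
        = ∑ j : Fin n, (-(πs i)⁻¹ + n * (if i = j then (πs j)⁻¹ else 0)) / S := by
          exact Finset.sum_congr rfl fun j _ => h1 j
      _ = 0 := by
          rw [← Finset.sum_div, Finset.sum_add_distrib, Finset.sum_const, ← Finset.mul_sum,
            Finset.sum_ite_eq Finset.univ i (fun j => (πs j)⁻¹)]
          simp
  set A : Fin n → Fin n → ℝ := fun i j => -(πs j / πs i) + n * if i = j then 1 else 0 with hA
  set u : Fin n → ℝ := fun j => (πs j)⁻¹ / S with hu
  have hprob_u : IsProb u := by
    constructor
    · intro j; exact div_nonneg (inv_nonneg.mpr (hpos j).le) hSpos.le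
    · simp only [hu, div_eq_mul_inv, ← Finset.sum_mul]
      exact mul_inv_cancel₀ hSpos.ne'
  have hprob_πs : IsProb πs := ⟨fun i => (hpos i).le, hsum⟩
  -- payoff with πs first is always 0
  have pay1 : ∀ π' : Fin n → ℝ, payoff A πs π' = 0 := by
    intro π'
    unfold payoff
    rw [Finset.sum_comm]
    refine Finset.sum_eq_zero fun j _ => ?_
    have : ∑ i, πs i * π' j * A i j = π' j * ∑ i, πs i * A i j := by
      rw [Finset.mul_sum]; exact Finset.sum_congr rfl fun i _ => by ring
    rw [this, key1 j, mul_zero]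
  -- payoff with u second is always 0
  have pay2 : ∀ π : Fin n → ℝ, payoff A π u = 0 := by
    intro π
    unfold payoff
    refine Finset.sum_eq_zero fun i _ => ?_
    have : ∑ j, π i * u j * A i j = π i * ∑ j, A i j * u j := by
      rw [Finset.mul_sum]; exact Finset.sum_congr rfl fun j _ => by ring
    rw [this, key2 i, mul_zero]
  have wc_πs : worstCase A πs = 0 := by
    unfold worstCase
    have : (fun π' => payoff A πs π') '' {π' | IsProb π'} = {0} := by
      apply Set.eq_singleton_iff_unique_mem.mpr
      constructor
      · exact ⟨πs, hprob_πs, pay1 πs⟩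
      · rintro x ⟨π', _, rfl⟩; exact pay1 π'
    rw [this, csInf_singleton]
  have wc_le : ∀ π, IsProb π → worstCase A π ≤ 0 := by
    intro π hπ
    unfold worstCase
    have hmem : (0:ℝ) ∈ (fun π' => payoff A π π') '' {π' | IsProb π'} :=
      ⟨u, hprob_u, pay2 π⟩
    have hbdd : BddBelow ((fun π' => payoff A π π') '' {π' | IsProb π'}) := by
      refine ⟨-∑ i, ∑ j, |A i j|, ?_⟩
      rintro x ⟨π', hπ', rfl⟩
      have hle1 : ∀ i, π i ≤ 1 := by
        intro i
        calc π i ≤ ∑ k, π k := Finset.single_le_sum (fun k _ => hπ.1 k) (Finset.mem_univ i)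
          _ = 1 := hπ.2
      have hle2 : ∀ j, π' j ≤ 1 := by
        intro j
        calc π' j ≤ ∑ k, π' k := Finset.single_le_sum (fun k _ => hπ'.1 k) (Finset.mem_univ j)
          _ = 1 := hπ'.2
      unfold payoff
      rw [← Finset.sum_neg_distrib]
      refine Finset.sum_le_sum fun i _ => ?_
      rw [← Finset.sum_neg_distrib]
      refine Finset.sum_le_sum fun j _ => ?_
      have h1 : |π i * π' j * A i j| ≤ |A i j| := by
        rw [abs_mul, abs_mul]
        have : |π i| * |π' j| ≤ 1 := by
          rw [abs_of_nonneg (hπ.1 i), abs_of_nonneg (hπ'.1 j)]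
          exact mul_le_one₀ (hle1 i) (hπ'.1 j) (hle2 j)
        calc |π i| * |π' j| * |A i j| ≤ 1 * |A i j| :=
              mul_le_mul_of_nonneg_right this (abs_nonneg _)
          _ = |A i j| := one_mul _
      linarith [neg_abs_le (π i * π' j * A i j)]
    exact csInf_le hbdd hmem
  refine ⟨fun j => le_of_eq (key1 j), fun j => by rw [sub_zero, key1 j, mul_zero],
    key2, hprob_πs, fun π' hπ' => ?_⟩
  rw [wc_πs]
  exact wc_le π' hπ'
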